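/- For H ∈ (0,1), the integral ∫_ℝ [(1−u)^{H−1/2} 1_{u≤1} − (−u)^{H−1/2} 1_{u≤0}]² du equals [Γ(H+1/2)]² / (sin(πH) Γ(2H+1)). -/

import Mathlib

open MeasureTheory Real Set Filter

/-- Integrability on `Ioi 0` from power bounds near `0` and `∞`. -/
lemma integrableOn_Ioi_of_bounds {f : ℝ → ℝ} (hc : ContinuousOn f (Ioi 0))
    {p q C1 C2 : ℝ} (hp : -1 < p) (hq : q < -1)
    (h1 : ∀ s ∈ Ioc (0:ℝ) 1, |f s| ≤ C1 * s ^ p)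
    (h2 : ∀ s ∈ Ioi (1:ℝ), |f s| ≤ C2 * s ^ q) :
    IntegrableOn f (Ioi (0:ℝ)) := by
  have hmeas : ∀ (s : Set ℝ), MeasurableSet s → s ⊆ Ioi 0 → AEStronglyMeasurable f (volume.restrict s) :=
    fun s hs hsub => (hc.mono hsub).aestronglyMeasurable hs
  have i1 : IntegrableOn f (Ioc (0:ℝ) 1) := by
    have hbase : IntegrableOn (fun s : ℝ => C1 * s ^ p) (Ioc (0:ℝ) 1) :=
      ((intervalIntegral.intervalIntegrable_rpow' hp (a := 0) (b := 1)).1).const_mul C1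
    refine Integrable.mono' hbase (hmeas _ measurableSet_Ioc Ioc_subset_Ioi_self) ?_
    filter_upwards [ae_restrict_mem measurableSet_Ioc] with s hs
    simpa using h1 s hs
  have i2 : IntegrableOn f (Ioi (1:ℝ)) := by
    have hbase : IntegrableOn (fun s : ℝ => C2 * s ^ q) (Ioi (1:ℝ)) :=
      (integrableOn_Ioi_rpow_of_lt hq one_pos).const_mul C2
    refine Integrable.mono' hbase (hmeas _ measurableSet_Ioi (fun x hx => mem_Ioi.mpr (lt_trans one_pos (mem_Ioi.mp hx)))) ?_
    filter_upwards [ae_restrict_mem measurableSet_Ioi] with s hs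
    simpa using h2 s hs
  have := i1.union i2
  rwa [Ioc_union_Ioi_eq_Ioi zero_le_one] at this

/-- MVT bound for the kernel difference. -/
lemma abs_rpow_diff_le {a : ℝ} (ha : a < 1) {s : ℝ} (hs : 0 < s) :
    |(1 + s) ^ a - s ^ a| ≤ |a| * s ^ (a - 1) := by
  rcases eq_or_ne a 0 with rfl | ha0
  · simp
  have hcont : ContinuousOn (fun x : ℝ => x ^ a) (Icc s (1 + s)) := by
    intro x hx
    exact (Real.continuousAt_rpow_const x a (Or.inl (ne_of_gt (lt_of_lt_of_le hs hx.1)))).continuousWithinAt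
  have hderiv : ∀ x ∈ Ioo s (1 + s), HasDerivAt (fun x : ℝ => x ^ a) (a * x ^ (a - 1)) x :=
    fun x hx => Real.hasDerivAt_rpow_const (Or.inl (ne_of_gt (hs.trans hx.1)))
  obtain ⟨c, hc, hceq⟩ := exists_hasDerivAt_eq_slope (fun x : ℝ => x ^ a)
    (fun x => a * x ^ (a - 1)) (by linarith) hcont hderiv
  have : (1 + s) ^ a - s ^ a = a * c ^ (a - 1) := by
    rw [hceq]; field_simp; ring
  rw [this, abs_mul]
  have hle : |c ^ (a-1)| ≤ s ^ (a-1) := by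
    calc |c ^ (a-1)| = c ^ (a-1) := abs_of_nonneg (Real.rpow_nonneg (le_of_lt (hs.trans hc.1)) _)
      _ ≤ s ^ (a-1) := Real.rpow_le_rpow_of_nonpos hs hc.1.le (by linarith)
  exact mul_le_mul le_rfl hle (abs_nonneg _) (abs_nonneg _)

lemma beta_Ioc_aux {p q : ℝ} (hp : 0 < p) (hq : 0 < q) :
    IntegrableOn (fun x : ℝ => x ^ (p-1) * (1-x) ^ (q-1)) (Ioc (0:ℝ) 1) ∧
    ∫ x in Ioc (0:ℝ) 1, x ^ (p-1) * (1-x) ^ (q-1)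
      = Real.Gamma p * Real.Gamma q / Real.Gamma (p+q) := by
  have hpc : (0:ℝ) < (p:ℂ).re := by simpa using hp
  have hqc : (0:ℝ) < (q:ℂ).re := by simpa using hq
  have hconv := Complex.betaIntegral_convergent hpc hqc
  have hIoc : IntegrableOn (fun x : ℝ => (x:ℂ) ^ ((p:ℂ)-1) * ((1:ℂ)-x) ^ ((q:ℂ)-1)) (Ioc (0:ℝ) 1) := by
    simpa [intervalIntegrable_iff_integrableOn_Ioc_of_le (zero_le_one' ℝ)] using hconv
  have hEq : ∀ x ∈ Ioc (0:ℝ) 1,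
      ((x ^ (p-1) * (1-x) ^ (q-1) : ℝ) : ℂ) = (x:ℂ) ^ ((p:ℂ)-1) * ((1:ℂ)-x) ^ ((q:ℂ)-1) := by
    intro x hx
    have h1 : (0:ℝ) ≤ x := hx.1.le
    have h2 : (0:ℝ) ≤ 1 - x := by linarith [hx.2]
    rw [Complex.ofReal_mul, Complex.ofReal_cpow h1, Complex.ofReal_cpow h2]
    push_cast
    ring_nf
  constructor
  · have : IntegrableOn (fun x : ℝ => ((x:ℂ) ^ ((p:ℂ)-1) * ((1:ℂ)-x) ^ ((q:ℂ)-1)).re) (Ioc (0:ℝ) 1) :=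
      hIoc.re
    refine this.congr_fun (fun x hx => ?_) measurableSet_Ioc
    beta_reduce
    rw [← hEq x hx, Complex.ofReal_re]
  · have hval : (∫ x in Ioc (0:ℝ) 1, (x:ℂ) ^ ((p:ℂ)-1) * ((1:ℂ)-x) ^ ((q:ℂ)-1))
        = Complex.betaIntegral p q := by
      rw [Complex.betaIntegral, intervalIntegral.integral_of_le (zero_le_one' ℝ)]
    have hbeta : Complex.betaIntegral p q
        = Complex.Gamma p * Complex.Gamma q / Complex.Gamma (p+q) := by
      have h := Complex.Gamma_mul_Gamma_eq_betaIntegral hpc hqc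
      have hne : Complex.Gamma ((p:ℂ)+q) ≠ 0 := by
        rw [← Complex.ofReal_add, Complex.Gamma_ofReal]
        exact_mod_cast (Real.Gamma_pos_of_pos (by positivity)).ne'
      rw [eq_div_iff hne, h]
      ring
    have : ((∫ x in Ioc (0:ℝ) 1, x ^ (p-1) * (1-x) ^ (q-1) : ℝ) : ℂ)
        = Complex.Gamma p * Complex.Gamma q / Complex.Gamma (p+q) := by
      rw [← hbeta, ← hval,
        (setIntegral_congr_fun measurableSet_Ioc hEq).symm]
      exact (integral_ofReal (𝕜 := ℂ)).symm
    rw [← Complex.ofReal_add, Complex.Gamma_ofReal, Complex.Gamma_ofReal, Complex.Gamma_ofReal] at this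
    exact_mod_cast this

lemma beta_Ioi_aux {p q : ℝ} (hp : 0 < p) (hq : 0 < q) :
    IntegrableOn (fun t : ℝ => t ^ (p-1) * (1+t) ^ (-(p+q))) (Ioi (0:ℝ)) ∧
    ∫ t in Ioi (0:ℝ), t ^ (p-1) * (1+t) ^ (-(p+q))
      = Real.Gamma p * Real.Gamma q / Real.Gamma (p+q) := by
  set φ : ℝ → ℝ := fun x => x / (1 - x) with hφ
  set φ' : ℝ → ℝ := fun x => 1 / (1 - x) ^ 2 with hφ'
  have hderiv : ∀ x ∈ Ioo (0:ℝ) 1, HasDerivWithinAt φ (φ' x) (Ioo (0:ℝ) 1) x := by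
    intro x hx
    have hne : 1 - x ≠ 0 := by simp only [mem_Ioo] at hx; intro h; linarith
    have : HasDerivAt φ (φ' x) x := by
      have h1 : HasDerivAt (fun y : ℝ => y) 1 x := hasDerivAt_id x
      have h2 : HasDerivAt (fun y : ℝ => 1 - y) (-1) x := by
        simpa using (hasDerivAt_id x).const_sub 1
      have := h1.div h2 hne
      have heq : (1*(1-x) - x*(-1))/(1-x)^2 = φ' x := by
        simp only [hφ']
        ring
      rw [heq] at this
      exact this
    exact this.hasDerivWithinAt
  have hinj : InjOn φ (Ioo (0:ℝ) 1) := by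
    intro x hx y hy hxy
    simp only [hφ, mem_Ioo] at *
    have hx1 : 1 - x ≠ 0 := by intro h; linarith [hx.2]
    have hy1 : 1 - y ≠ 0 := by intro h; linarith [hy.2]
    field_simp at hxy
    linarith
  have himg : φ '' Ioo (0:ℝ) 1 = Ioi (0:ℝ) := by
    ext t
    constructor
    · rintro ⟨x, hx, rfl⟩
      simp only [mem_Ioo] at hx
      exact div_pos hx.1 (by linarith [hx.2])
    · intro ht
      refine ⟨t / (1 + t), ?_, ?_⟩
      · simp only [mem_Ioo]
        constructor
        · exact div_pos ht (by linarith [mem_Ioi.mp ht])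
        · rw [div_lt_one (by linarith [mem_Ioi.mp ht])]; linarith
      · simp only [hφ]
        have h1 : (1:ℝ) + t ≠ 0 := by have := mem_Ioi.mp ht; linarith
        field_simp
        ring
  have key : ∀ (g : ℝ → ℝ), (∫ t in Ioi (0:ℝ), g t) = ∫ x in Ioo (0:ℝ) 1, |φ' x| • g (φ x) :=
    fun g => by rw [← himg]; exact integral_image_eq_integral_abs_deriv_smul measurableSet_Ioo hderiv hinj g
  have keyInt : ∀ (g : ℝ → ℝ), IntegrableOn g (Ioi (0:ℝ)) ↔
      IntegrableOn (fun x => |φ' x| • g (φ x)) (Ioo (0:ℝ) 1) :=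
    fun g => by rw [← himg]; exact integrableOn_image_iff_integrableOn_abs_deriv_smul measurableSet_Ioo hderiv hinj g
  -- pointwise identity on Ioo 0 1
  have hpt : ∀ x ∈ Ioo (0:ℝ) 1,
      |φ' x| • ((φ x) ^ (p-1) * (1 + φ x) ^ (-(p+q))) = x ^ (p-1) * (1-x) ^ (q-1) := by
    intro x hx
    simp only [mem_Ioo] at hx
    have hx0 : 0 < x := hx.1
    have hx1 : 0 < 1 - x := by linarith [hx.2]
    have h1t : 1 + φ x = 1 / (1 - x) := by
      simp only [hφ]; field_simp; ring
    have e1 : (φ x) ^ (p-1) = x ^ (p-1) * ((1-x) ^ (p-1))⁻¹ := by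
      simp only [hφ]
      rw [Real.div_rpow hx0.le hx1.le, div_eq_mul_inv]
    have e2 : (1 + φ x) ^ (-(p+q)) = (1-x) ^ (p+q) := by
      rw [h1t, one_div, Real.inv_rpow hx1.le, Real.rpow_neg hx1.le, inv_inv]
    have habs : |φ' x| = ((1-x) ^ (2:ℕ))⁻¹ := by
      simp only [hφ', one_div]
      rw [abs_of_pos (by positivity)]
    rw [smul_eq_mul, habs, e1, e2]
    have h2 : ((1-x) ^ (2:ℕ))⁻¹ = (1-x) ^ (-((2:ℕ):ℝ)) := by
      rw [Real.rpow_neg hx1.le, Real.rpow_natCast]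
    have h3 : ((1-x) ^ (p-1))⁻¹ = (1-x) ^ (-(p-1)) := by
      rw [Real.rpow_neg hx1.le]
    rw [h2, h3]
    have hcomb : (1-x) ^ (-((2:ℕ):ℝ)) * ((1-x) ^ (-(p-1)) * (1-x) ^ (p+q)) = (1-x) ^ (q-1) := by
      rw [← Real.rpow_add hx1, ← Real.rpow_add hx1]
      congr 1
      push_cast
      ring
    calc (1-x) ^ (-((2:ℕ):ℝ)) * (x ^ (p-1) * (1-x) ^ (-(p-1)) * (1-x) ^ (p+q))
        = x ^ (p-1) * ((1-x) ^ (-((2:ℕ):ℝ)) * ((1-x) ^ (-(p-1)) * (1-x) ^ (p+q))) := by ring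
      _ = x ^ (p-1) * (1-x) ^ (q-1) := by rw [hcomb]
  obtain ⟨hbi, hbv⟩ := beta_Ioc_aux hp hq
  have hbiOoo : IntegrableOn (fun x : ℝ => x ^ (p-1) * (1-x) ^ (q-1)) (Ioo (0:ℝ) 1) :=
    hbi.mono_set Ioo_subset_Ioc_self
  constructor
  · rw [keyInt]
    exact hbiOoo.congr_fun (fun x hx => (hpt x hx).symm) measurableSet_Ioo
  · rw [key, setIntegral_congr_fun measurableSet_Ioo hpt, ← integral_Ioc_eq_integral_Ioo, hbv]

lemma gamma_algebra {H : ℝ} (h0 : 0 < H) (h1 : H < 1) (hne : H ≠ 1/2) :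
    Real.Gamma (H+1/2) * Real.Gamma (2-2*H) / Real.Gamma (3/2-H) / (2*H)
      = (Real.Gamma (H+1/2))^2 / (Real.sin (π*H) * Real.Gamma (2*H+1)) := by
  have sinpos : 0 < Real.sin (π*H) :=
    Real.sin_pos_of_pos_of_lt_pi (mul_pos Real.pi_pos h0) ((mul_lt_iff_lt_one_right Real.pi_pos).2 h1)
  have cosne : Real.cos (π*H) ≠ 0 := by
    rcases lt_or_gt_of_ne hne with hlt | hgt
    · exact ne_of_gt (Real.cos_pos_of_mem_Ioo ⟨by nlinarith [Real.pi_pos], by nlinarith [Real.pi_pos]⟩)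
    · exact ne_of_lt (Real.cos_neg_of_pi_div_two_lt_of_lt (by nlinarith [Real.pi_pos]) (by nlinarith [Real.pi_pos]))
  have e1 : Real.Gamma (H+1/2) * Real.Gamma (1/2-H) * Real.cos (π*H) = π := by
    have h := Real.Gamma_mul_Gamma_one_sub (H+1/2)
    rw [show (1:ℝ)-(H+1/2) = 1/2-H by ring, show π*(H+1/2) = π*H + π/2 by ring,
      Real.sin_add_pi_div_two] at h
    rw [eq_div_iff cosne] at h
    linear_combination h
  have e2 : Real.Gamma (2*H) * Real.Gamma (1-2*H) * (2 * Real.sin (π*H) * Real.cos (π*H)) = π := by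
    have h := Real.Gamma_mul_Gamma_one_sub (2*H)
    rw [show π*(2*H) = 2*(π*H) by ring, Real.sin_two_mul] at h
    rw [eq_div_iff (by positivity : 2 * Real.sin (π*H) * Real.cos (π*H) ≠ 0)] at h
    linear_combination h
  have g22 : Real.Gamma (2-2*H) = (1-2*H) * Real.Gamma (1-2*H) := by
    rw [show (2:ℝ)-2*H = (1-2*H)+1 by ring, Real.Gamma_add_one (by intro hc; apply hne; linarith)]
  have g32 : Real.Gamma (3/2-H) = (1/2-H) * Real.Gamma (1/2-H) := by
    rw [show (3:ℝ)/2-H = (1/2-H)+1 by ring, Real.Gamma_add_one (by intro hc; apply hne; linarith)]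
  have g21 : Real.Gamma (2*H+1) = 2*H * Real.Gamma (2*H) := by
    rw [Real.Gamma_add_one (by positivity)]
  have core : Real.Gamma (2-2*H) * (Real.sin (π*H) * Real.Gamma (2*H))
      = Real.Gamma (H+1/2) * Real.Gamma (3/2-H) := by
    have h2c : (2:ℝ) * Real.cos (π*H) ≠ 0 := by simpa using cosne
    apply mul_left_cancel₀ h2c
    rw [g22, g32]
    linear_combination (1-2*H)*e2 - (1-2*H)*e1
  have hΓ32 : Real.Gamma (3/2-H) ≠ 0 := ne_of_gt (Real.Gamma_pos_of_pos (by linarith))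
  have hΓ2H : Real.Gamma (2*H) ≠ 0 := ne_of_gt (Real.Gamma_pos_of_pos (by linarith))
  have hHne : (2*H : ℝ) ≠ 0 := by positivity
  rw [g21, div_div, div_eq_div_iff (by positivity)
    (mul_ne_zero (ne_of_gt sinpos) (mul_ne_zero hHne hΓ2H)), pow_two]
  linear_combination (2*H*Real.Gamma (H+1/2)) * core

noncomputable def GG (a s : ℝ) : ℝ := (1+s)^a - s^a
noncomputable def hh (a s : ℝ) : ℝ := s^a * (1+s)^(a-1) - (1+s)^(2*a-1)

lemma contOn_rpow_Ioi (c : ℝ) : ContinuousOn (fun s : ℝ => s ^ c) (Ioi (0:ℝ)) :=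
  fun x hx => (Real.continuousAt_rpow_const x c (Or.inl (ne_of_gt hx))).continuousWithinAt

lemma contOn_one_add_rpow (c : ℝ) : ContinuousOn (fun s : ℝ => (1+s) ^ c) (Ioi (0:ℝ)) := by
  intro x hx
  have h1 : (1:ℝ) + x ≠ 0 := by have := mem_Ioi.mp hx; positivity
  exact ((Real.continuousAt_rpow_const (1+x) c (Or.inl h1)).comp
    ((continuous_const.add continuous_id).continuousAt)).continuousWithinAt

lemma contOn_GG (a : ℝ) : ContinuousOn (GG a) (Ioi (0:ℝ)) :=
  (contOn_one_add_rpow a).sub (contOn_rpow_Ioi a)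

lemma contOn_hh (a : ℝ) : ContinuousOn (hh a) (Ioi (0:ℝ)) :=
  ((contOn_rpow_Ioi a).mul (contOn_one_add_rpow (a-1))).sub (contOn_one_add_rpow (2*a-1))

lemma GG_bound0 {a : ℝ} (ha1 : -(1/2) < a) (ha2 : a < 1/2) :
    ∀ s ∈ Ioc (0:ℝ) 1, |GG a s| ≤ 3 * s ^ (-|a|) := by
  intro s hs
  obtain ⟨hs0, hs1⟩ := hs
  have hs0' : (0:ℝ) ≤ s := hs0.le
  have hpow1 : (1:ℝ) ≤ s ^ (-|a|) := by
    rw [show (1:ℝ) = s ^ (0:ℝ) by rw [Real.rpow_zero]]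
    exact Real.rpow_le_rpow_of_exponent_ge hs0 hs1 (neg_nonpos.mpr (abs_nonneg a))
  rcases le_or_gt 0 a with hpos | hneg
  · -- a ≥ 0 : |G| ≤ (1+s)^a + s^a ≤ 2^(1/2) + 1 ≤ 3
    have h1 : (1+s) ^ a ≤ 2 := by
      calc (1+s) ^ a ≤ 2 ^ a := Real.rpow_le_rpow (by linarith) (by linarith) hpos
        _ ≤ 2 ^ (1:ℝ) := Real.rpow_le_rpow_of_exponent_le one_le_two (by linarith)
        _ = 2 := by norm_num
    have h2 : s ^ a ≤ 1 := Real.rpow_le_one hs0' hs1 hpos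
    have h3 : |GG a s| ≤ (1+s) ^ a + s ^ a := by
      rw [GG]
      calc |(1+s)^a - s^a| ≤ |(1+s)^a| + |s^a| := abs_sub _ _
        _ = (1+s)^a + s^a := by
            rw [abs_of_nonneg (Real.rpow_nonneg (by linarith) _),
              abs_of_nonneg (Real.rpow_nonneg hs0' _)]
    calc |GG a s| ≤ (1+s)^a + s^a := h3
      _ ≤ 3 := by linarith
      _ ≤ 3 * s ^ (-|a|) := by linarith
  · -- a < 0 : |G| ≤ 1 + s^a ≤ 2 s^a = 2 s^(-|a|)
    have hsa : s ^ a = s ^ (-|a|) := by rw [abs_of_neg hneg, neg_neg]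
    have h1 : (1+s) ^ a ≤ 1 := Real.rpow_le_one_of_one_le_of_nonpos (by linarith) hneg.le
    have h3 : |GG a s| ≤ (1+s) ^ a + s ^ a := by
      rw [GG]
      calc |(1+s)^a - s^a| ≤ |(1+s)^a| + |s^a| := abs_sub _ _
        _ = (1+s)^a + s^a := by
            rw [abs_of_nonneg (Real.rpow_nonneg (by linarith) _),
              abs_of_nonneg (Real.rpow_nonneg hs0' _)]
    calc |GG a s| ≤ (1+s)^a + s^a := h3
      _ ≤ 1 + s ^ (-|a|) := by rw [← hsa]; linarith
      _ ≤ 3 * s ^ (-|a|) := by linarith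

lemma hh_eq {a s : ℝ} (hs : 0 < s) : hh a s = -((1+s)^(a-1) * GG a s) := by
  have h1 : (0:ℝ) < 1 + s := by linarith
  rw [hh, GG, show 2*a-1 = (a-1) + a by ring, Real.rpow_add h1]
  ring

lemma GG_boundInf {a : ℝ} (ha2 : a < 1) :
    ∀ s ∈ Ioi (1:ℝ), |GG a s| ≤ |a| * s ^ (a-1) := fun s hs =>
  abs_rpow_diff_le ha2 (lt_trans one_pos hs)

lemma intGG2 {a : ℝ} (ha1 : -(1/2) < a) (ha2 : a < 1/2) :
    IntegrableOn (fun s => (GG a s)^2) (Ioi (0:ℝ)) := by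
  have habs : -(1/2) < -|a| := by rw [neg_lt_neg_iff, abs_lt]; constructor <;> linarith
  refine integrableOn_Ioi_of_bounds (((contOn_GG a).mul (contOn_GG a)).congr ?_)
    (p := -|a| + -|a|) (q := (a-1) + (a-1)) (C1 := 9) (C2 := |a| * |a|) ?_ ?_ ?_ ?_
  · intro x _; simp [sq]
  · linarith
  · linarith
  · intro s hs
    have h := GG_bound0 ha1 ha2 s hs
    have : |(GG a s)^2| = |GG a s| * |GG a s| := by rw [sq, abs_mul]
    rw [this, Real.rpow_add hs.1]
    calc |GG a s| * |GG a s| ≤ (3 * s ^ (-|a|)) * (3 * s ^ (-|a|)) :=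
          mul_le_mul h h (abs_nonneg _) (mul_nonneg (by norm_num) (Real.rpow_nonneg hs.1.le _))
      _ = 9 * (s ^ (-|a|) * s ^ (-|a|)) := by ring
  · intro s hs
    have hs0 : (0:ℝ) < s := lt_trans one_pos hs
    have h := GG_boundInf (a := a) (by linarith) s hs
    have : |(GG a s)^2| = |GG a s| * |GG a s| := by rw [sq, abs_mul]
    rw [this, Real.rpow_add hs0]
    calc |GG a s| * |GG a s| ≤ (|a| * s ^ (a-1)) * (|a| * s ^ (a-1)) :=
          mul_le_mul h h (abs_nonneg _) (mul_nonneg (abs_nonneg _) (Real.rpow_nonneg hs0.le _))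
      _ = |a| * |a| * (s ^ (a-1) * s ^ (a-1)) := by ring

lemma intHH {a : ℝ} (ha1 : -(1/2) < a) (ha2 : a < 1/2) :
    IntegrableOn (hh a) (Ioi (0:ℝ)) := by
  have habs : -(1/2) < -|a| := by rw [neg_lt_neg_iff, abs_lt]; constructor <;> linarith
  refine integrableOn_Ioi_of_bounds (contOn_hh a)
    (p := -|a|) (q := (a-1) + (a-1)) (C1 := 3) (C2 := |a|) (by linarith) (by linarith) ?_ ?_
  · intro s hs
    rw [hh_eq hs.1, abs_neg, abs_mul]
    have h1 : |(1+s) ^ (a-1)| ≤ 1 := by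
      rw [abs_of_nonneg (Real.rpow_nonneg (by linarith [hs.1]) _)]
      exact Real.rpow_le_one_of_one_le_of_nonpos (by linarith [hs.1]) (by linarith)
    calc |(1+s)^(a-1)| * |GG a s| ≤ 1 * (3 * s ^ (-|a|)) :=
          mul_le_mul h1 (GG_bound0 ha1 ha2 s hs) (abs_nonneg _) one_pos.le
      _ = 3 * s ^ (-|a|) := by ring
  · intro s hs
    have hs0 : (0:ℝ) < s := lt_trans one_pos hs
    rw [hh_eq hs0, abs_neg, abs_mul, Real.rpow_add hs0]
    have h1 : |(1+s) ^ (a-1)| ≤ s ^ (a-1) := by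
      rw [abs_of_nonneg (Real.rpow_nonneg (by linarith) _)]
      exact Real.rpow_le_rpow_of_nonpos hs0 (by linarith) (by linarith)
    have hG := GG_boundInf (a := a) (by linarith) s hs
    calc |(1+s)^(a-1)| * |GG a s| ≤ (s ^ (a-1)) * (|a| * s ^ (a-1)) :=
          mul_le_mul h1 hG (abs_nonneg _) (Real.rpow_nonneg hs0.le _)
      _ = |a| * (s ^ (a-1) * s ^ (a-1)) := by ring

lemma hasDerivAt_GG (a : ℝ) {s : ℝ} (hs : 0 < s) :
    HasDerivAt (GG a) (a * (1+s)^(a-1) - a * s^(a-1)) s := by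
  have h1 : (1:ℝ) + s ≠ 0 := by positivity
  have hA : HasDerivAt (fun s : ℝ => (1+s)^a) (1 * a * (1+s)^(a-1)) s :=
    (((hasDerivAt_id s).const_add 1)).rpow_const (Or.inl h1)
  have hB : HasDerivAt (fun s : ℝ => s^a) (a * s^(a-1)) s :=
    Real.hasDerivAt_rpow_const (Or.inl (ne_of_gt hs))
  have h := hA.sub hB
  rw [one_mul] at h
  exact h

lemma rpow_rel1 {a s : ℝ} (hs : 0 < s) : (1+s) * (1+s)^(a-1) = (1+s)^a := by
  have h1 : (1:ℝ) + s ≠ 0 := by positivity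
  rw [mul_comm, ← Real.rpow_add_one h1, sub_add_cancel]

lemma rpow_rel2 {a s : ℝ} (hs : 0 < s) : s * s^(a-1) = s^a := by
  rw [mul_comm, ← Real.rpow_add_one (ne_of_gt hs), sub_add_cancel]

lemma rpow_rel3 {a s : ℝ} (hs : 0 < s) : (1+s)^(2*a-1) = (1+s)^(a-1) * (1+s)^a := by
  have h1 : (0:ℝ) < 1 + s := by positivity
  rw [← Real.rpow_add h1]; ring_nf

lemma hasDerivAt_phi (a : ℝ) {s : ℝ} (hs : 0 < s) :
    HasDerivAt (fun s => s * (GG a s)^2)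
      ((2*a+1) * (GG a s)^2 + 2*a * hh a s) s := by
  have hG := hasDerivAt_GG a hs
  have h := (hasDerivAt_id s).mul (hG.pow 2)
  convert h using 1
  · rfl
  · rfl
  · rfl
  have e1 := rpow_rel1 (a := a) hs
  have e2 := rpow_rel2 (a := a) hs
  have e3 := rpow_rel3 (a := a) hs
  simp only [GG, hh, id_eq, show (2:ℕ)-1 = 1 from rfl, pow_one, Pi.pow_apply]
  linear_combination (-(2*a*((1+s)^a - s^a))) * e1 + (2*a*((1+s)^a - s^a)) * e2 + (-(2*a)) * e3

lemma keyIBP {a : ℝ} (ha1 : -(1/2) < a) (ha2 : a < 1/2) :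
    (2*a+1) * (∫ s in Ioi (0:ℝ), (GG a s)^2) + 2*a * (∫ s in Ioi (0:ℝ), hh a s) = 0 := by
  have habs : |a| < 1/2 := abs_lt.mpr ⟨by linarith, ha2⟩
  have hint : IntegrableOn (fun s => (2*a+1) * (GG a s)^2 + 2*a * hh a s) (Ioi (0:ℝ)) :=
    ((intGG2 ha1 ha2).const_mul (2*a+1)).add ((intHH ha1 ha2).const_mul (2*a))
  have hcont : ContinuousWithinAt (fun s => s * (GG a s)^2) (Ici (0:ℝ)) 0 := by
    have hc : (0:ℝ) < 1 - 2*|a| := by linarith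
    have hb1 : ∀ᶠ s in nhdsWithin (0:ℝ) (Ici (0:ℝ)), ‖s * (GG a s)^2‖ ≤ 9 * s ^ (1 - 2*|a|) := by
      filter_upwards [Icc_mem_nhdsGE_of_mem (by norm_num : (0:ℝ) ∈ Ico (0:ℝ) 1)] with s hs
      rcases eq_or_lt_of_le hs.1 with rfl | hs0
      · simp [Real.zero_rpow (ne_of_gt hc)]
      · have hb := GG_bound0 ha1 ha2 s ⟨hs0, hs.2⟩
        have : ‖s * (GG a s)^2‖ = s * |GG a s|^2 := by
          rw [norm_mul, Real.norm_eq_abs, Real.norm_eq_abs, abs_of_nonneg hs.1, abs_pow]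
        rw [this]
        calc s * |GG a s|^2 ≤ s * (3 * s ^ (-|a|))^2 := by
              have := sq_le_sq' (by linarith [abs_nonneg (GG a s), hb] : -(3 * s ^ (-|a|)) ≤ |GG a s|) hb
              exact mul_le_mul_of_nonneg_left this hs.1
          _ = 9 * (s ^ (-|a|) * s ^ (-|a|) * s) := by ring
          _ = 9 * s ^ (1 - 2*|a|) := by
              rw [← Real.rpow_add hs0, ← Real.rpow_add_one (ne_of_gt hs0),
                show -|a| + -|a| + 1 = 1 - 2*|a| by ring]
    have hb2 : Tendsto (fun s : ℝ => 9 * s ^ (1 - 2*|a|)) (nhdsWithin (0:ℝ) (Ici (0:ℝ))) (nhds 0) := by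
      have h0 : Tendsto (fun s : ℝ => s ^ (1 - 2*|a|)) (nhdsWithin (0:ℝ) (Ici 0)) (nhds ((0:ℝ) ^ (1 - 2*|a|))) :=
        (Real.continuousAt_rpow_const 0 _ (Or.inr hc.le)).continuousWithinAt
      have h9 := h0.const_mul (9:ℝ)
      simpa [Real.zero_rpow (ne_of_gt hc)] using h9
    have := squeeze_zero_norm' hb1 hb2
    simpa [ContinuousWithinAt] using this
  have htop : Tendsto (fun s => s * (GG a s)^2) atTop (nhds 0) := by
    have hb1 : ∀ᶠ s in atTop, ‖s * (GG a s)^2‖ ≤ (a*a) * s ^ (2*a - 1) := by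
      filter_upwards [Ioi_mem_atTop (1:ℝ)] with s hs
      have hs0 : (0:ℝ) < s := lt_trans one_pos hs
      have hb := GG_boundInf (a := a) (by linarith) s hs
      have : ‖s * (GG a s)^2‖ = s * |GG a s|^2 := by
        rw [norm_mul, Real.norm_eq_abs, Real.norm_eq_abs, abs_of_nonneg hs0.le, abs_pow]
      rw [this]
      calc s * |GG a s|^2 ≤ s * (|a| * s ^ (a-1))^2 := by
            have := sq_le_sq' (by linarith [abs_nonneg (GG a s), hb] : -(|a| * s ^ (a-1)) ≤ |GG a s|) hb
            exact mul_le_mul_of_nonneg_left this hs0.le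
        _ = (|a| * |a|) * (s ^ (a-1) * s ^ (a-1) * s) := by ring
        _ = (a*a) * s ^ (2*a-1) := by
            rw [← Real.rpow_add hs0, ← Real.rpow_add_one (ne_of_gt hs0),
              show a-1+(a-1)+1 = 2*a-1 by ring, ← abs_mul, abs_mul_self]
    have hb2 : Tendsto (fun s : ℝ => (a*a) * s ^ (2*a - 1)) atTop (nhds 0) := by
      have h1 : Tendsto (fun s : ℝ => s ^ (-(1 - 2*a))) atTop (nhds 0) :=
        tendsto_rpow_neg_atTop (by linarith)
      have h2 := h1.const_mul (a*a)
      rw [mul_zero] at h2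
      refine h2.congr (fun s => by rw [neg_sub])
    exact squeeze_zero_norm' hb1 hb2
  have := integral_Ioi_of_hasDerivAt_of_tendsto hcont
    (fun s hs => hasDerivAt_phi a hs) hint htop
  rw [MeasureTheory.integral_add ((intGG2 ha1 ha2).const_mul (2*a+1))
    ((intHH ha1 ha2).const_mul (2*a)), MeasureTheory.integral_const_mul,
    MeasureTheory.integral_const_mul] at this
  simpa using this

lemma int_one_add_rpow {a : ℝ} (ha1 : -(1/2) < a) (ha0 : a < 0) :
    IntegrableOn (fun s : ℝ => (1+s)^(2*a-1)) (Ioi (0:ℝ)) ∧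
    ∫ s in Ioi (0:ℝ), (1+s)^(2*a-1) = -(2*a)⁻¹ := by
  have hint : IntegrableOn (fun s : ℝ => (1+s)^(2*a-1)) (Ioi (0:ℝ)) := by
    refine integrableOn_Ioi_of_bounds (contOn_one_add_rpow _) (p := 0) (q := 2*a-1)
      (C1 := 1) (C2 := 1) (by norm_num) (by linarith) ?_ ?_
    · intro s hs
      rw [Real.rpow_zero, mul_one, abs_of_nonneg (Real.rpow_nonneg (by linarith [hs.1]) _)]
      exact Real.rpow_le_one_of_one_le_of_nonpos (by linarith [hs.1]) (by linarith)
    · intro s hs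
      have hs0 : (0:ℝ) < s := lt_trans one_pos hs
      rw [one_mul, abs_of_nonneg (Real.rpow_nonneg (by linarith) _)]
      exact Real.rpow_le_rpow_of_nonpos hs0 (by linarith) (by linarith)
  refine ⟨hint, ?_⟩
  have hderiv : ∀ s ∈ Ioi (0:ℝ), HasDerivAt (fun s : ℝ => (1+s)^(2*a) * (2*a)⁻¹)
      ((1+s)^(2*a-1)) s := by
    intro s hs
    have h1 : (1:ℝ) + s ≠ 0 := by have := mem_Ioi.mp hs; positivity
    have := (((hasDerivAt_id s).const_add 1)).rpow_const (p := 2*a) (Or.inl h1)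
    have h2 := this.mul_const (2*a)⁻¹
    convert h2 using 1
    · rfl
    · rfl
    · rfl
    have h2a : (2*a) ≠ 0 := by linarith
    field_simp
    rw [id_eq, mul_div_cancel_left₀ _ (ne_of_lt ha0)]
  have hcont : ContinuousWithinAt (fun s : ℝ => (1+s)^(2*a) * (2*a)⁻¹) (Ici (0:ℝ)) 0 := by
    have h1 : (1:ℝ) + 0 ≠ 0 := by norm_num
    exact (((Real.continuousAt_rpow_const (1+0) (2*a) (Or.inl h1)).comp
      ((continuous_const.add continuous_id).continuousAt)).mul continuousAt_const).continuousWithinAt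
  have htop : Tendsto (fun s : ℝ => (1+s)^(2*a) * (2*a)⁻¹) atTop (nhds 0) := by
    have h1 : Tendsto (fun x : ℝ => x ^ (-(-(2*a)))) atTop (nhds 0) :=
      tendsto_rpow_neg_atTop (by linarith)
    have h2 : Tendsto (fun s : ℝ => 1 + s) atTop atTop := tendsto_atTop_add_const_left _ _ tendsto_id
    have h3 := (h1.comp h2).mul_const (2*a)⁻¹
    rw [zero_mul] at h3
    refine h3.congr (fun s => ?_)
    simp [Function.comp, neg_neg]
  have := integral_Ioi_of_hasDerivAt_of_tendsto hcont hderiv hint htop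
  rw [this]
  norm_num [Real.one_rpow]

lemma Jval {a : ℝ} (ha1 : -(1/2) < a) (ha2 : a < 1/2) (ha0 : a ≠ 0) :
    ∫ s in Ioi (0:ℝ), hh a s
      = (1 - Real.Gamma (a+1) * Real.Gamma (1-2*a) / Real.Gamma (1-a)) / (2*a) := by
  rcases lt_or_gt_of_ne ha0 with hneg | hpos
  · -- a < 0 : split into two convergent integrals
    obtain ⟨hiA, hvA⟩ := beta_Ioi_aux (p := a+1) (q := -(2*a)) (by linarith) (by linarith)
    rw [show a+1-1 = a by ring, show -((a+1) + -(2*a)) = a-1 by ring] at hiA hvA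
    rw [show a+1 + -(2*a) = 1-a by ring] at hvA
    obtain ⟨hiB, hvB⟩ := int_one_add_rpow ha1 hneg
    have hsub : ∫ s in Ioi (0:ℝ), hh a s
        = (∫ s in Ioi (0:ℝ), s^a * (1+s)^(a-1)) - ∫ s in Ioi (0:ℝ), (1+s)^(2*a-1) := by
      rw [← MeasureTheory.integral_sub hiA hiB]; rfl
    rw [hsub, hvA, hvB]
    have hG1 : Real.Gamma (1-2*a) = -(2*a) * Real.Gamma (-(2*a)) := by
      rw [show (1:ℝ)-2*a = -(2*a)+1 by ring, Real.Gamma_add_one (by linarith)]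
    have hΓpos : 0 < Real.Gamma (1-a) := Real.Gamma_pos_of_pos (by linarith)
    rw [hG1]
    field_simp
    ring
  · -- a > 0 : second integration by parts
    obtain ⟨hiC, hvC⟩ := beta_Ioi_aux (p := a) (q := 1-2*a) hpos (by linarith)
    rw [show -(a + (1-2*a)) = a-1 by ring] at hiC hvC
    rw [show a + (1-2*a) = 1-a by ring] at hvC
    set ψ : ℝ → ℝ := fun s => -((1+s)^a * GG a s / (2*a)) with hψdef
    have hderiv : ∀ s ∈ Ioi (0:ℝ), HasDerivAt ψ
        (hh a s + (1/2) * (s^(a-1) * (1+s)^(a-1))) s := by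
      intro s hs
      have hs0 : (0:ℝ) < s := mem_Ioi.mp hs
      have h1 : (1:ℝ) + s ≠ 0 := by positivity
      have hA : HasDerivAt (fun s : ℝ => (1+s)^a) (1 * a * (1+s)^(a-1)) s :=
        (((hasDerivAt_id s).const_add 1)).rpow_const (Or.inl h1)
      have hG := hasDerivAt_GG a hs0
      have h := ((hA.mul hG).div_const (2*a)).neg
      have h2a : (2*a) ≠ 0 := by positivity
      have hclean : HasDerivAt ψ
          (-(((1+s)^(a-1) * GG a s + (1+s)^a * (1+s)^(a-1) - (1+s)^a * s^(a-1)) / 2)) s := by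
        convert h using 1
        · rfl
        · rfl
        · rfl
        field_simp
        ring
      have e1 := rpow_rel1 (a := a) hs0
      have e2 := rpow_rel2 (a := a) hs0
      have e3 := rpow_rel3 (a := a) hs0
      convert hclean using 1
      simp only [GG, hh]
      linear_combination (s^(a-1)/2) * e1 - ((1+s)^(a-1)/2) * e2 - e3
    have hint : IntegrableOn (fun s : ℝ => hh a s + (1/2) * (s^(a-1) * (1+s)^(a-1))) (Ioi (0:ℝ)) :=
      (intHH ha1 ha2).add (hiC.const_mul (1/2))
    have hcont : ContinuousWithinAt ψ (Ici (0:ℝ)) 0 := by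
      apply ContinuousAt.continuousWithinAt
      have c1 : ContinuousAt (fun s : ℝ => (1+s)^a) 0 :=
        (Real.continuousAt_rpow_const (1+0) a (Or.inl (by norm_num))).comp
          ((continuous_const.add continuous_id).continuousAt)
      have c2 : ContinuousAt (fun s : ℝ => s^a) 0 :=
        Real.continuousAt_rpow_const 0 a (Or.inr hpos.le)
      exact ((c1.mul (c1.sub c2)).div_const (2*a)).neg
    have htop : Tendsto ψ atTop (nhds 0) := by
      have hb1 : ∀ᶠ s in atTop, ‖ψ s‖ ≤ (2^a * |a| / (2*a)) * s ^ (2*a-1) := by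
        filter_upwards [Ioi_mem_atTop (1:ℝ)] with s hs
        have hs1 : (1:ℝ) < s := mem_Ioi.mp hs
        have hs0 : (0:ℝ) < s := lt_trans one_pos hs1
        have hG := GG_boundInf (a := a) (by linarith) s hs
        have hA : (1+s)^a ≤ 2^a * s^a := by
          rw [← Real.mul_rpow (by norm_num) hs0.le]
          exact Real.rpow_le_rpow (by linarith) (by linarith) hpos.le
        have hAnn : (0:ℝ) ≤ (1+s)^a := Real.rpow_nonneg (by linarith) _
        have : ‖ψ s‖ = (1+s)^a * |GG a s| / (2*a) := by
          simp only [hψdef, norm_neg, norm_div, Real.norm_eq_abs, abs_mul,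
            abs_of_nonneg hAnn, abs_of_pos (by positivity : (0:ℝ) < 2*a)]
        rw [this]
        have hstep : (1+s)^a * |GG a s| ≤ (2^a * s^a) * (|a| * s^(a-1)) :=
          mul_le_mul hA hG (abs_nonneg _) (by positivity)
        calc (1+s)^a * |GG a s| / (2*a) ≤ (2^a * s^a) * (|a| * s^(a-1)) / (2*a) := by
              apply div_le_div_of_nonneg_right hstep (by positivity)
          _ = (2^a * |a| / (2*a)) * (s^a * s^(a-1)) := by ring
          _ = (2^a * |a| / (2*a)) * s ^ (2*a-1) := by
              rw [← Real.rpow_add hs0, show a + (a-1) = 2*a-1 by ring]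
      have hb2 : Tendsto (fun s : ℝ => (2^a * |a| / (2*a)) * s ^ (2*a-1)) atTop (nhds 0) := by
        have h1 : Tendsto (fun s : ℝ => s ^ (-(1-2*a))) atTop (nhds 0) :=
          tendsto_rpow_neg_atTop (by linarith)
        have h2 := h1.const_mul (2^a * |a| / (2*a))
        rw [mul_zero] at h2
        exact h2.congr (fun s => by rw [neg_sub])
      exact squeeze_zero_norm' hb1 hb2
    have hFTC := integral_Ioi_of_hasDerivAt_of_tendsto hcont hderiv hint htop
    have hψ0 : ψ 0 = -(2*a)⁻¹ := by
      simp only [hψdef, GG]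
      rw [add_zero, Real.one_rpow, Real.zero_rpow (ne_of_gt hpos)]
      ring
    rw [MeasureTheory.integral_add (intHH ha1 ha2) (hiC.const_mul (1/2)),
      MeasureTheory.integral_const_mul, hvC, hψ0] at hFTC
    have hGa : Real.Gamma (a+1) = a * Real.Gamma a := Real.Gamma_add_one (ne_of_gt hpos)
    have hΓpos : 0 < Real.Gamma (1-a) := Real.Gamma_pos_of_pos (by linarith)
    have := hFTC
    rw [hGa]
    have h2a : (2*a) ≠ 0 := by positivity
    field_simp at this ⊢
    linarith

lemma Fval {a : ℝ} (ha1 : -(1/2) < a) (ha2 : a < 1/2) (ha0 : a ≠ 0) :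
    ∫ s in Ioi (0:ℝ), (GG a s)^2
      = (Real.Gamma (a+1) * Real.Gamma (1-2*a) / Real.Gamma (1-a) - 1) / (2*a+1) := by
  have hk := keyIBP ha1 ha2
  rw [Jval ha1 ha2 ha0] at hk
  have h2a : (2*a) ≠ 0 := by simpa using ha0
  have h2a1 : (2*a+1) ≠ 0 := ne_of_gt (by linarith : (0:ℝ) < 2*a+1)
  field_simp at hk
  rw [eq_div_iff h2a1]
  linarith

theorem integral_sq_fBm_kernel (H : ℝ) (hH : H ∈ Set.Ioo (0 : ℝ) 1) :
    ∫ u : ℝ, ((if u ≤ 1 then (1 - u) ^ (H - 1/2) else 0) -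
        (if u ≤ 0 then (-u) ^ (H - 1/2) else 0))^2 =
      (Real.Gamma (H + 1/2))^2 / (Real.sin (Real.pi * H) * Real.Gamma (2*H + 1)) := by
  obtain ⟨h0, h1⟩ := hH
  by_cases hne : H = 1/2
  · subst hne
    have hf : (fun u : ℝ => ((if u ≤ 1 then (1 - u) ^ ((1:ℝ)/2 - 1/2) else 0) -
        (if u ≤ 0 then (-u) ^ ((1:ℝ)/2 - 1/2) else 0))^2)
        = fun u : ℝ => Set.indicator (Ioc (0:ℝ) 1) (fun _ => (1:ℝ)) u := by
      funext u
      rw [show (1:ℝ)/2 - 1/2 = 0 by norm_num]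
      simp only [Real.rpow_zero]
      by_cases hu0 : u ≤ 0
      · rw [if_pos (le_trans hu0 zero_le_one), if_pos hu0,
          Set.indicator_of_notMem (fun hmem => absurd hmem.1 (not_lt.mpr hu0))]
        ring
      · by_cases hu1 : u ≤ 1
        · rw [if_pos hu1, if_neg hu0, Set.indicator_of_mem (mem_Ioc.mpr ⟨not_le.mp hu0, hu1⟩)]
          ring
        · rw [if_neg hu1, if_neg hu0, Set.indicator_of_notMem (fun hmem => hu1 hmem.2)]
          ring
    rw [hf, MeasureTheory.integral_indicator measurableSet_Ioc, MeasureTheory.setIntegral_const,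
      Real.volume_real_Ioc]
    rw [show Real.pi * (1/2) = π/2 by ring, Real.sin_pi_div_two,
      show (1:ℝ)/2 + 1/2 = 1 by norm_num, show 2*((1:ℝ)/2) + 1 = 2 by norm_num,
      Real.Gamma_one, Real.Gamma_two]
    norm_num
  · obtain ⟨a, ha⟩ : ∃ a : ℝ, a = H - 1/2 := ⟨H - 1/2, rfl⟩
    rw [← ha]
    have ha1 : -(1/2) < a := by rw [ha]; linarith
    have ha2 : a < 1/2 := by rw [ha]; linarith
    have ha0 : a ≠ 0 := by rw [ha]; intro hc; apply hne; linarith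
    set f : ℝ → ℝ := fun u => ((if u ≤ 1 then (1 - u) ^ a else 0) -
        (if u ≤ 0 then (-u) ^ a else 0))^2 with hfdef
    have hf1 : ∀ u ∈ Iic (0:ℝ), f u = (GG a (-u))^2 := by
      intro u hu
      have hu0 : u ≤ 0 := hu
      simp only [hfdef, GG, if_pos (le_trans hu0 zero_le_one), if_pos hu0]
      rw [show (1:ℝ) + -u = 1 - u by ring]
    have hf2 : ∀ u ∈ Ioc (0:ℝ) 1, f u = ((1-u) ^ a)^2 := by
      intro u hu
      simp only [hfdef, if_pos hu.2, if_neg (not_le.mpr hu.1), sub_zero]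
    have hf3 : ∀ u ∈ Ioi (1:ℝ), f u = 0 := by
      intro u hu
      have h1' : ¬ (u ≤ 1) := not_le.mpr hu
      have h0' : ¬ (u ≤ 0) := not_le.mpr (lt_trans one_pos hu)
      simp only [hfdef, if_neg h1', if_neg h0', sub_zero]
      norm_num
    have hG2 := intGG2 ha1 ha2
    have hI1 : IntegrableOn f (Iic (0:ℝ)) := by
      have hIci : IntegrableOn (fun s => (GG a s)^2) (Ici (0:ℝ)) :=
        (integrableOn_Ici_iff_integrableOn_Ioi).mpr hG2
      have hneg : IntegrableOn (fun u : ℝ => (GG a (-u))^2) (Iic (0:ℝ)) := by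
        have h := (MeasurePreserving.integrableOn_comp_preimage
          (Measure.measurePreserving_neg (volume : Measure ℝ))
          (Homeomorph.neg ℝ).measurableEmbedding).2 hIci
        exact h.mono_set (by intro x hx; simpa using hx : Iic (0:ℝ) ⊆ Neg.neg ⁻¹' (Ici 0))
      exact hneg.congr_fun (fun u hu => (hf1 u hu).symm) measurableSet_Iic
    have h2am1 : -1 < 2*a := by linarith
    have hI2 : IntegrableOn f (Ioc (0:ℝ) 1) := by
      have hbase : IntegrableOn (fun u : ℝ => (1-u) ^ (2*a)) (Ioc (0:ℝ) 1) := by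
        have h := (intervalIntegral.intervalIntegrable_rpow' (a := 0) (b := 1)
          (r := 2*a) h2am1).comp_sub_left 1
        norm_num at h
        exact h.2
      have heq : ∀ u ∈ Ioc (0:ℝ) 1, (1-u) ^ (2*a) = f u := by
        intro u hu
        rw [hf2 u hu]
        rcases eq_or_lt_of_le hu.2 with rfl | hu1
        · rw [sub_self, Real.zero_rpow (by simpa using ha0 : 2*a ≠ 0), Real.zero_rpow ha0]
          norm_num
        · rw [← Real.rpow_natCast ((1-u)^a) 2, ← Real.rpow_mul (by linarith : (0:ℝ) ≤ 1-u)]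
          norm_num [mul_comm]
      exact hbase.congr_fun heq measurableSet_Ioc
    have hI3 : IntegrableOn f (Ioi (1:ℝ)) :=
      integrableOn_zero.congr_fun (fun u hu => (hf3 u hu).symm) measurableSet_Ioi
    have hIoi0 : IntegrableOn f (Ioi (0:ℝ)) := by
      have h := hI2.union hI3
      rwa [Ioc_union_Ioi_eq_Ioi zero_le_one] at h
    have hint : Integrable f := by
      rw [← MeasureTheory.integrableOn_univ, ← Iic_union_Ioi (a := (0:ℝ))]
      exact hI1.union hIoi0
    have hsplit : ∫ u, f u = (∫ u in Iic (0:ℝ), f u) + ((∫ u in Ioc (0:ℝ) 1, f u)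
        + ∫ u in Ioi (1:ℝ), f u) := by
      rw [← MeasureTheory.setIntegral_union (Ioc_disjoint_Ioi le_rfl) measurableSet_Ioi hI2 hI3,
        Ioc_union_Ioi_eq_Ioi zero_le_one,
        ← MeasureTheory.integral_add_compl measurableSet_Iic hint, compl_Iic]
    have hp1 : ∫ u in Iic (0:ℝ), f u
        = (Real.Gamma (a+1) * Real.Gamma (1-2*a) / Real.Gamma (1-a) - 1) / (2*a+1) := by
      rw [setIntegral_congr_fun measurableSet_Iic hf1]
      have hcn : (∫ x in Iic (0:ℝ), (GG a (-x))^2) = ∫ x in Ioi (-(0:ℝ)), (GG a x)^2 :=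
        integral_comp_neg_Iic 0 (fun s => (GG a s)^2)
      rw [hcn, neg_zero, Fval ha1 ha2 ha0]
    have hp2 : ∫ u in Ioc (0:ℝ) 1, f u = 1/(2*a+1) := by
      have heq : ∀ u ∈ Ioo (0:ℝ) 1, f u = (1-u) ^ (2*a) := by
        intro u hu
        rw [hf2 u ⟨hu.1, hu.2.le⟩, ← Real.rpow_natCast ((1-u)^a) 2,
          ← Real.rpow_mul (by linarith [hu.2] : (0:ℝ) ≤ 1-u)]
        norm_num [mul_comm]
      rw [integral_Ioc_eq_integral_Ioo, setIntegral_congr_fun measurableSet_Ioo heq,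
        ← integral_Ioc_eq_integral_Ioo, ← intervalIntegral.integral_of_le zero_le_one]
      have hc := intervalIntegral.integral_comp_sub_left (a := 0) (b := 1)
        (fun x : ℝ => x ^ (2*a)) 1
      norm_num at hc
      rw [hc, integral_rpow (Or.inl h2am1)]
      rw [Real.one_rpow, Real.zero_rpow (ne_of_gt (by linarith : (0:ℝ) < 2*a+1))]
      norm_num
    have hp3 : ∫ u in Ioi (1:ℝ), f u = 0 := by
      rw [setIntegral_congr_fun measurableSet_Ioi hf3]
      simp
    have hΓpos32 : (0:ℝ) < Real.Gamma (1-a) := Real.Gamma_pos_of_pos (by linarith)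
    have h2a1 : (0:ℝ) < 2*a+1 := by linarith
    have hval : ∫ u, f u = Real.Gamma (a+1) * Real.Gamma (1-2*a) / Real.Gamma (1-a) / (2*a+1) := by
      rw [hsplit, hp1, hp2, hp3]
      field_simp
      ring
    rw [hval]
    have hga := gamma_algebra h0 h1 hne
    rw [show a+1 = H+1/2 by rw [ha]; ring, show 1-2*a = 2-2*H by rw [ha]; ring,
      show 1-a = 3/2-H by rw [ha]; ring, show 2*a+1 = 2*H by rw [ha]; ring]
    rw [div_div]
    rw [← hga]
    ring
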